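/- Let f = (f_n)_{n≥0} and g = (g_n)_{n≥0} be martingales with respect to the same filtration, fix λ > 0 and a positive integer n_max, and define stopping times recursively by S_0 := 0 and S_k := min{ n > S_{k−1} : |Σ_{S_{k−1} < i < j ≤ n} df_i dg_j| ≥ λ/3, or max_{n' ∈ (S_{k−1}, n]} |f_{n'} − f_{S_{k−1}}| · |g_n − g_{n'}| ≥ λ/3 } (with min ∅ = ∞). Then every interval of integers (n', n''] ⊆ (0, n_max] satisfying |Σ_{n' < i < j ≤ n''} df_i dg_j| ≥ λ contains at least one of the stopping times S_k with k ≥ 1; consequently, the λ-jump counting function N_λ(f,g) := sup over all m ∈ ℕ and 0 ≤ n_0 < n_1 < ⋯ < n_m ≤ n_max of card{ k ∈ {1,…,m} : |Σ_{n_{k−1} < i < j ≤ n_k} df_i dg_j| ≥ λ } satisfies N_λ(f,g) ≤ sup{ k ∈ ℕ∪{0} : S_k ≤ n_max } pointwise. -/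

import Mathlib

open MeasureTheory ENNReal

noncomputable section

/-- The truncated martingale paraproduct `Π_{n,n'}(f,g) = ∑_{n < i < j ≤ n'} df_i dg_j`. -/
def truncPP {Ω : Type} (f g : ℕ → Ω → ℝ) (n n' : ℕ) (ω : Ω) : ℝ :=
  ∑ j ∈ Finset.Ioc n n', ∑ i ∈ Finset.Ioo n j,
    (f i ω - f (i - 1) ω) * (g j ω - g (j - 1) ω)

/-- The stopping condition: `|Σ_{m < i < j ≤ n} df_i dg_j| ≥ λ/3` or
`max_{n' ∈ (m, n]} |f_{n'} − f_m|·|g_n − g_{n'}| ≥ λ/3`. -/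
def jumpCond {Ω : Type} (lam : ℝ) (f g : ℕ → Ω → ℝ) (m n : ℕ) (ω : Ω) : Prop :=
  lam / 3 ≤ |truncPP f g m n ω| ∨
    ∃ n' : ℕ, m < n' ∧ n' ≤ n ∧ lam / 3 ≤ |f n' ω - f m ω| * |g n ω - g n' ω|

/-- The recursively defined stopping times `S_0 = 0`,
`S_k = min{n > S_{k−1} : jumpCond (S_{k−1}, n)}`, with `min ∅ = ∞`. -/
def stopSeq {Ω : Type} (lam : ℝ) (f g : ℕ → Ω → ℝ) : ℕ → Ω → ℕ∞
  | 0, _ => 0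
  | k + 1, ω => sInf {x : ℕ∞ | ∃ m n : ℕ, stopSeq lam f g k ω = (m : ℕ∞) ∧ x = (n : ℕ∞) ∧
      m < n ∧ jumpCond lam f g m n ω}

/-- The λ-jump counting function of the truncated paraproducts, restricted to times `≤ nmax`. -/
def jumpCount {Ω : Type} (lam : ℝ) (f g : ℕ → Ω → ℝ) (nmax : ℕ) (ω : Ω) : ℕ∞ :=
  ⨆ (m : ℕ) (n : Fin (m + 1) → ℕ) (_ : StrictMono n) (_ : n (Fin.last m) ≤ nmax),
    ((Finset.univ.filter
      fun k : Fin m => lam ≤ |truncPP f g (n k.castSucc) (n k.succ) ω|).card : ℕ∞)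

lemma tele (u : ℕ → ℝ) {m n : ℕ} (h : m ≤ n) :
    ∑ i ∈ Finset.Ioc m n, (u i - u (i - 1)) = u n - u m := by
  induction n, h using Nat.le_induction with
  | base => simp
  | succ n hn ih =>
    rw [Finset.sum_Ioc_succ_top hn, ih]
    simp

lemma decomp {Ω : Type} (f g : ℕ → Ω → ℝ) (ω : Ω) {m n' n'' : ℕ}
    (h1 : m ≤ n') (h2 : n' ≤ n'') :
    truncPP f g m n'' ω = truncPP f g m n' ω
      + (f n' ω - f m ω) * (g n'' ω - g n' ω) + truncPP f g n' n'' ω := by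
  unfold truncPP
  rw [← Finset.sum_Ioc_consecutive _ h1 h2]
  have key : ∀ j ∈ Finset.Ioc n' n'',
      ∑ i ∈ Finset.Ioo m j, (f i ω - f (i - 1) ω) * (g j ω - g (j - 1) ω)
      = (f n' ω - f m ω) * (g j ω - g (j - 1) ω)
        + ∑ i ∈ Finset.Ioo n' j, (f i ω - f (i - 1) ω) * (g j ω - g (j - 1) ω) := by
    intro j hj
    simp only [Finset.mem_Ioc] at hj
    have e1 : Finset.Ioo m j = Finset.Ioc m (j - 1) := by
      ext x; simp only [Finset.mem_Ioo, Finset.mem_Ioc]; omega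
    have e2 : Finset.Ioo n' j = Finset.Ioc n' (j - 1) := by
      ext x; simp only [Finset.mem_Ioo, Finset.mem_Ioc]; omega
    rw [e1, e2, ← Finset.sum_Ioc_consecutive _ h1 (by omega : n' ≤ j - 1)]
    congr 1
    rw [← Finset.sum_mul, tele (fun i => f i ω) h1]
  have hB : ∑ j ∈ Finset.Ioc n' n'', ∑ i ∈ Finset.Ioo m j,
        (f i ω - f (i - 1) ω) * (g j ω - g (j - 1) ω)
      = (f n' ω - f m ω) * (g n'' ω - g n' ω)
        + ∑ j ∈ Finset.Ioc n' n'', ∑ i ∈ Finset.Ioo n' j,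
            (f i ω - f (i - 1) ω) * (g j ω - g (j - 1) ω) := by
    rw [Finset.sum_congr rfl key, Finset.sum_add_distrib, ← Finset.mul_sum,
      tele (fun j => g j ω) h2]
  rw [hB]; ring

lemma sInf_image_cast {A : Set ℕ} (hA : A.Nonempty) :
    sInf (Nat.cast '' A : Set ℕ∞) = ((sInf A : ℕ) : ℕ∞) := by
  apply le_antisymm
  · exact sInf_le ⟨sInf A, Nat.sInf_mem hA, rfl⟩
  · apply le_sInf
    rintro x ⟨a, ha, rfl⟩
    exact_mod_cast Nat.sInf_le ha

lemma stopSeq_succ_eq {Ω : Type} (lam : ℝ) (f g : ℕ → Ω → ℝ) (k : ℕ) (ω : Ω) {m : ℕ}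
    (hk : stopSeq lam f g k ω = (m : ℕ∞)) :
    stopSeq lam f g (k + 1) ω
      = sInf (Nat.cast '' {n : ℕ | m < n ∧ jumpCond lam f g m n ω} : Set ℕ∞) := by
  show sInf _ = _
  congr 1
  ext x
  constructor
  · rintro ⟨m', n, h1, rfl, h3, h4⟩
    have : m' = m := by rw [hk] at h1; exact_mod_cast h1.symm
    subst this
    exact ⟨n, ⟨h3, h4⟩, rfl⟩
  · rintro ⟨n, ⟨h3, h4⟩, rfl⟩
    exact ⟨m, n, hk, rfl, h3, h4⟩

lemma stopSeq_succ_finite {Ω : Type} (lam : ℝ) (f g : ℕ → Ω → ℝ) (k : ℕ) (ω : Ω) {n : ℕ}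
    (hk : stopSeq lam f g (k + 1) ω = (n : ℕ∞)) :
    ∃ m : ℕ, stopSeq lam f g k ω = (m : ℕ∞) ∧ m < n ∧ jumpCond lam f g m n ω := by
  rcases eq_or_ne (stopSeq lam f g k ω) ⊤ with h | h
  · exfalso
    have : stopSeq lam f g (k + 1) ω = ⊤ := by
      show sInf _ = ⊤
      refine (congrArg sInf (?_ : _ = (∅ : Set ℕ∞))).trans sInf_empty
      ext x
      simp only [Set.mem_setOf_eq, Set.mem_empty_iff_false, iff_false]
      rintro ⟨m', n', h1, _⟩
      rw [h] at h1
      exact (ENat.top_ne_coe m') h1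
    rw [hk] at this
    exact (ENat.coe_ne_top n) this
  · obtain ⟨m, hm⟩ : ∃ m : ℕ, stopSeq lam f g k ω = (m : ℕ∞) := by
      cases hS : stopSeq lam f g k ω with
      | top => exact absurd hS h
      | coe m => exact ⟨m, rfl⟩
    set A := {n : ℕ | m < n ∧ jumpCond lam f g m n ω} with hA
    have hrw : stopSeq lam f g (k + 1) ω = sInf (Nat.cast '' A : Set ℕ∞) :=
      stopSeq_succ_eq lam f g k ω hm
    rcases A.eq_empty_or_nonempty with hAe | hAne
    · rw [hAe] at hrw
      simp only [Set.image_empty, sInf_empty] at hrw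
      rw [hk] at hrw
      exact absurd hrw.symm (ENat.top_ne_coe n)
    · rw [sInf_image_cast hAne] at hrw
      rw [hk] at hrw
      have hn : n = sInf A := by exact_mod_cast hrw
      have := Nat.sInf_mem hAne
      rw [← hn] at this
      exact ⟨m, hm, this.1, this.2⟩

lemma stopSeq_le {Ω : Type} (lam : ℝ) (f g : ℕ → Ω → ℝ) (ω : Ω) :
    ∀ (k : ℕ) (m : ℕ), stopSeq lam f g k ω = (m : ℕ∞) → k ≤ m := by
  intro k
  induction k with
  | zero => intro m _; omega
  | succ k ih =>
    intro m hm
    obtain ⟨m', hm', hlt, _⟩ := stopSeq_succ_finite lam f g k ω hm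
    have := ih m' hm'
    omega

theorem stopping_times_dominate_jump_count
    {Ω : Type} [m0 : MeasurableSpace Ω] (μ : Measure Ω) [IsProbabilityMeasure μ]
    (𝓕 : Filtration ℕ m0) (f g : ℕ → Ω → ℝ)
    (hf : Martingale f 𝓕 μ) (hg : Martingale g 𝓕 μ)
    (lam : ℝ) (hlam : 0 < lam) (nmax : ℕ) (hnmax : 0 < nmax) :
    (∀ (ω : Ω) (n' n'' : ℕ), n' < n'' → n'' ≤ nmax → lam ≤ |truncPP f g n' n'' ω| →
      ∃ k : ℕ, 1 ≤ k ∧ ∃ m : ℕ, stopSeq lam f g k ω = (m : ℕ∞) ∧ n' < m ∧ m ≤ n'') ∧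
    (∀ ω : Ω, jumpCount lam f g nmax ω ≤
      ⨆ (k : ℕ) (_ : stopSeq lam f g k ω ≤ (nmax : ℕ∞)), (k : ℕ∞)) := by
  have H1 : ∀ (ω : Ω) (n' n'' : ℕ), n' < n'' → n'' ≤ nmax → lam ≤ |truncPP f g n' n'' ω| →
      ∃ k : ℕ, 1 ≤ k ∧ ∃ m : ℕ, stopSeq lam f g k ω = (m : ℕ∞) ∧ n' < m ∧ m ≤ n'' := by
    intro ω n' n'' hltn hlen hjump
    set K := {k : ℕ | ∃ m : ℕ, stopSeq lam f g k ω = (m : ℕ∞) ∧ m ≤ n'} with hK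
    have h0K : 0 ∈ K := ⟨0, rfl, Nat.zero_le _⟩
    have hbdd : BddAbove K := by
      refine ⟨n', ?_⟩
      rintro k ⟨m, hm, hle'⟩
      exact le_trans (stopSeq_le lam f g ω k m hm) hle'
    set k := sSup K with hk
    have hkK : k ∈ K := Nat.sSup_mem ⟨0, h0K⟩ hbdd
    obtain ⟨m, hSk, hmn'⟩ := hkK
    set A := {n : ℕ | m < n ∧ jumpCond lam f g m n ω} with hA
    have hAex : ∃ n0 ∈ A, n0 ≤ n'' := by
      by_contra hcon
      push_neg at hcon
      have hno : ∀ n, m < n → n ≤ n'' → ¬ jumpCond lam f g m n ω := by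
        intro n h1 h2 hj
        have := hcon n ⟨h1, hj⟩
        omega
      rcases eq_or_lt_of_le hmn' with heq | hlt'
      · have h := hno n'' (by omega) le_rfl
        rw [jumpCond] at h
        push_neg at h
        have h3 := h.1
        rw [heq] at h3
        linarith
      · have hn'c := hno n' hlt' (le_of_lt hltn)
        have hn''c := hno n'' (by omega) le_rfl
        rw [jumpCond] at hn'c hn''c
        push_neg at hn'c hn''c
        have hcross := hn''c.2 n' hlt' (le_of_lt hltn)
        have hdec := decomp f g ω (le_of_lt hlt') (le_of_lt hltn)
        have heq2 : truncPP f g n' n'' ω = truncPP f g m n'' ω - truncPP f g m n' ω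
            - (f n' ω - f m ω) * (g n'' ω - g n' ω) := by linarith
        have habs : |truncPP f g n' n'' ω| ≤ |truncPP f g m n'' ω| + |truncPP f g m n' ω|
            + |f n' ω - f m ω| * |g n'' ω - g n' ω| := by
          rw [heq2, ← abs_mul]
          exact (abs_sub _ _).trans (add_le_add (abs_sub _ _) le_rfl)
        linarith [hn'c.1, hn''c.1]
    obtain ⟨n0, hn0A, hn0le⟩ := hAex
    have hAne : A.Nonempty := ⟨n0, hn0A⟩
    set N := sInf A with hN
    have hNA : N ∈ A := Nat.sInf_mem hAne
    have hNle : N ≤ n'' := le_trans (Nat.sInf_le hn0A) hn0le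
    have hSk1 : stopSeq lam f g (k + 1) ω = (N : ℕ∞) := by
      rw [stopSeq_succ_eq lam f g k ω hSk, sInf_image_cast hAne]
    have hn'N : n' < N := by
      by_contra hcon
      push_neg at hcon
      have hmem : k + 1 ∈ K := ⟨N, hSk1, hcon⟩
      have := le_csSup hbdd hmem
      omega
    exact ⟨k + 1, by omega, N, hSk1, hn'N, hNle⟩
  refine ⟨H1, ?_⟩
  intro ω
  rw [jumpCount]
  refine iSup_le fun m => iSup_le fun n => iSup_le fun hmono => iSup_le fun hlast => ?_
  set T := Finset.univ.filter
      (fun k : Fin m => lam ≤ |truncPP f g (n k.castSucc) (n k.succ) ω|) with hT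
  have hchoice : ∀ k ∈ T, ∃ j mk : ℕ, 1 ≤ j ∧ stopSeq lam f g j ω = (mk : ℕ∞) ∧
      n k.castSucc < mk ∧ mk ≤ n k.succ := by
    intro k hk
    rw [hT, Finset.mem_filter] at hk
    obtain ⟨j, hj1, mk, h1, h2, h3⟩ := H1 ω _ _ (hmono k.castSucc_lt_succ)
      (le_trans (hmono.monotone (Fin.le_last _)) hlast) hk.2
    exact ⟨j, mk, hj1, h1, h2, h3⟩
  choose j mk hj1 hstop hlt2 hle2 using hchoice
  set J := T.attach.image (fun k => j k.1 k.2) with hJ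
  have hinj : Set.InjOn (fun k : {x // x ∈ T} => j k.1 k.2) T.attach := by
    intro a _ b _ hab
    by_contra hne
    have hne1 : a.1 ≠ b.1 := fun h => hne (Subtype.ext h)
    have hmkeq : mk a.1 a.2 = mk b.1 b.2 := by
      have h1 := hstop a.1 a.2
      have h2 := hstop b.1 b.2
      simp only at hab
      rw [hab, h2] at h1
      exact_mod_cast h1.symm
    rcases lt_or_gt_of_ne hne1 with h | h
    · have hmono' : n a.1.succ ≤ n b.1.castSucc := by
        apply hmono.monotone
        rw [Fin.le_def]
        simp only [Fin.val_succ, Fin.coe_castSucc]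
        exact h
      have h1 := hle2 a.1 a.2
      have h2 := hlt2 b.1 b.2
      omega
    · have hmono' : n b.1.succ ≤ n a.1.castSucc := by
        apply hmono.monotone
        rw [Fin.le_def]
        simp only [Fin.val_succ, Fin.coe_castSucc]
        exact h
      have h1 := hle2 b.1 b.2
      have h2 := hlt2 a.1 a.2
      omega
  have hcard : J.card = T.card := by
    rw [hJ, Finset.card_image_of_injOn hinj, Finset.card_attach]
  rcases J.eq_empty_or_nonempty with hJe | hJne
  · have : T.card = 0 := by rw [← hcard, hJe, Finset.card_empty]
    rw [this]
    simp
  · set M := J.max' hJne with hM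
    have hMJ : M ∈ J := J.max'_mem hJne
    rw [hJ, Finset.mem_image] at hMJ
    obtain ⟨a, _, hja⟩ := hMJ
    have hMle : (M : ℕ∞) ≤ ⨆ (k : ℕ) (_ : stopSeq lam f g k ω ≤ (nmax : ℕ∞)), (k : ℕ∞) := by
      have hcond : stopSeq lam f g M ω ≤ (nmax : ℕ∞) := by
        rw [← hja, hstop a.1 a.2]
        have : mk a.1 a.2 ≤ nmax :=
          le_trans (hle2 a.1 a.2) (le_trans (hmono.monotone (Fin.le_last _)) hlast)
        exact_mod_cast this
      exact le_iSup₂ (f := fun (k : ℕ) (_ : stopSeq lam f g k ω ≤ (nmax : ℕ∞)) => (k : ℕ∞))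
        M hcond
    have hcardM : T.card ≤ M := by
      have hsub : J ⊆ Finset.Icc 1 M := by
        intro x hx
        have hxM : x ≤ M := J.le_max' x hx
        rw [hJ, Finset.mem_image] at hx
        obtain ⟨b, _, hjb⟩ := hx
        rw [Finset.mem_Icc]
        exact ⟨hjb ▸ hj1 b.1 b.2, hxM⟩
      have := Finset.card_le_card hsub
      rw [Nat.card_Icc] at this
      omega
    exact le_trans (by exact_mod_cast hcardM) hMle

end
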